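/- The q-Chebyshev polynomials u_n(x,q) of the second kind, defined by u_0=1, u_1=x and u_n(x,q) = x u_{n-1}(x,q) - (q^{n-1}/((1+q^{n-1})(1+q^n))) u_{n-2}(x,q), satisfy u_n(x,q) = Σ_{k=0}^{⌊n/2⌋} [n-k choose k]_q q^{k^2} (-1)^k x^{n-2k} / ((-q;q)_k (-q^{n+1-k};q)_k). -/

import Mathlib

/-- The q-Pochhammer symbol `(a;q)_n`. -/
noncomputable def qPoch (a q : ℝ) (n : ℕ) : ℝ := ∏ j ∈ Finset.range n, (1 - q ^ j * a)

/-- The Gaussian (q-)binomial coefficient `[n choose k]_q`. -/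
noncomputable def qbinom (q : ℝ) (n k : ℕ) : ℝ :=
  qPoch q q n / (qPoch q q k * qPoch q q (n - k))

lemma qPoch_succ (a q : ℝ) (n : ℕ) : qPoch a q (n+1) = qPoch a q n * (1 - q^n * a) :=
  Finset.prod_range_succ _ _

lemma qPoch_succ' (a q : ℝ) (n : ℕ) : qPoch a q (n+1) = qPoch (q*a) q n * (1 - a) := by
  rw [qPoch, Finset.prod_range_succ', qPoch]
  congr 1
  · exact Finset.prod_congr rfl fun i _ => by ring
  · norm_num

lemma qPoch_q_pos {q : ℝ} (hq0 : 0 < q) (hq1 : q < 1) (n : ℕ) : 0 < qPoch q q n := by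
  apply Finset.prod_pos; intro i _
  have h1 : q^i ≤ 1 := pow_le_one₀ hq0.le hq1.le
  nlinarith [pow_pos hq0 i]

lemma qPoch_neg_pos {q : ℝ} (hq0 : 0 < q) {a : ℝ} (ha : a ≤ 0) (n : ℕ) :
    0 < qPoch a q n := by
  apply Finset.prod_pos; intro i _
  nlinarith [pow_pos hq0 i, mul_nonpos_of_nonneg_of_nonpos (pow_pos hq0 i).le ha]

lemma one_sub_pow_pos {q : ℝ} (hq0 : 0 < q) (hq1 : q < 1) (s : ℕ) : 0 < 1 - q^s*q := by
  have h1 : q^s ≤ 1 := pow_le_one₀ hq0.le hq1.le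
  nlinarith [pow_pos hq0 s]

noncomputable def cc (q : ℝ) (n k : ℕ) : ℝ :=
  qbinom q (n - k) k * q ^ (k ^ 2) * (-1 : ℝ) ^ k /
    (qPoch (-q) q k * qPoch (-(q ^ (n + 1 - k))) q k)

lemma qPoch_zero (a q : ℝ) : qPoch a q 0 = 1 := by simp [qPoch]

lemma cc_zero {q : ℝ} (hq0 : 0 < q) (hq1 : q < 1) (n : ℕ) : cc q n 0 = 1 := by
  have h := (qPoch_q_pos hq0 hq1 n).ne'
  simp [cc, qbinom, qPoch_zero, div_self h]

lemma key {q : ℝ} (hq0 : 0 < q) (hq1 : q < 1) (j t : ℕ) :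
    cc q (2*j+t+3) (j+1) = cc q (2*j+t+2) (j+1) -
      q ^ (2*j+t+2) / ((1 + q ^ (2*j+t+2)) * (1 + q ^ (2*j+t+3))) * cc q (2*j+t+1) j := by
  have e1 : 2*j+t+3 - (j+1) = j+t+2 := by omega
  have e2 : 2*j+t+3+1 - (j+1) = j+t+3 := by omega
  have e3 : 2*j+t+2 - (j+1) = j+t+1 := by omega
  have e4 : 2*j+t+2+1 - (j+1) = j+t+2 := by omega
  have e5 : 2*j+t+1 - j = j+t+1 := by omega
  have e6 : 2*j+t+1+1 - j = j+t+2 := by omega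
  have e7 : j+t+2 - (j+1) = t+1 := by omega
  have e8 : j+t+1 - (j+1) = t := by omega
  have e9 : j+t+1 - j = t+1 := by omega
  simp only [cc, qbinom, e1, e2, e3, e4, e5, e6, e7, e8, e9]
  -- recurrences
  have h1 : qPoch q q (j+t+2) = qPoch q q (j+t+1) * (1 - q^(j+t+1)*q) := by
    rw [show j+t+2 = (j+t+1)+1 by omega]; exact qPoch_succ q q (j+t+1)
  have h2 : qPoch q q (j+1) = qPoch q q j * (1 - q^j*q) := qPoch_succ q q j
  have h3 : qPoch q q (t+1) = qPoch q q t * (1 - q^t*q) := qPoch_succ q q t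
  have h4 : qPoch (-q) q (j+1) = qPoch (-q) q j * (1 - q^j*(-q)) := qPoch_succ (-q) q j
  have h5 : qPoch (-(q^(j+t+3))) q (j+1)
      = qPoch (-(q^(j+t+3))) q j * (1 - q^j*(-(q^(j+t+3)))) := qPoch_succ _ q j
  have h6 : qPoch (-(q^(j+t+2))) q (j+1)
      = qPoch (-(q^(j+t+2))) q j * (1 - q^j*(-(q^(j+t+2)))) := qPoch_succ _ q j
  have hden : (0:ℝ) < 1 + q^(j+t+2) := by positivity
  have hB2 : (0:ℝ) < qPoch (-(q^(j+t+2))) q j := qPoch_neg_pos hq0 (neg_nonpos.mpr (pow_pos hq0 _).le) j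
  have hB3 : qPoch (-(q^(j+t+3))) q j
      = qPoch (-(q^(j+t+2))) q j * (1 + q^j * q^(j+t+2)) / (1 + q^(j+t+2)) := by
    have hs := qPoch_succ' (-(q^(j+t+2))) q j
    rw [show q * -(q^(j+t+2)) = -(q^(j+t+3)) by ring] at hs
    have hr := qPoch_succ (-(q^(j+t+2))) q j
    field_simp
    linear_combination hr - hs
  rw [h1, h2, h3, h4, h5, h6, hB3]
  have hPj := (qPoch_q_pos hq0 hq1 j).ne'
  have hPt := (qPoch_q_pos hq0 hq1 t).ne'
  have hNj := (qPoch_neg_pos hq0 (q := q) (a := -q) (by linarith) j).ne'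
  have f1 := (one_sub_pow_pos hq0 hq1 j).ne'
  have f2 := (one_sub_pow_pos hq0 hq1 t).ne'
  have f3 := (one_sub_pow_pos hq0 hq1 (j+t+1)).ne'
  have f4 : (1:ℝ) - q^j*(-q) ≠ 0 := by nlinarith [pow_pos hq0 j]
  have f5 : (1:ℝ) - q^j*(-(q^(j+t+3))) ≠ 0 := by nlinarith [pow_pos hq0 j, pow_pos hq0 (j+t+3)]
  have f6 : (1:ℝ) - q^j*(-(q^(j+t+2))) ≠ 0 := by nlinarith [pow_pos hq0 j, pow_pos hq0 (j+t+2)]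
  have f7 : (0:ℝ) < 1 + q^(2*j+t+2) := by positivity
  have f8 : (0:ℝ) < 1 + q^(2*j+t+3) := by positivity
  have f9 : (0:ℝ) < 1 + q^j * q^(j+t+2) := by positivity
  have g1 : (1:ℝ) - q*q^j ≠ 0 := by rw [mul_comm]; exact f1
  have g2 : (1:ℝ) - q*q^t ≠ 0 := by rw [mul_comm]; exact f2
  have g3 : (1:ℝ) - -(q*q^j) ≠ 0 := by nlinarith [pow_pos hq0 j]
  have g4 : (1:ℝ) - -(q^j*q^(j+t+3)) ≠ 0 := by nlinarith [pow_pos hq0 j, pow_pos hq0 (j+t+3)]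
  have g5 : (1:ℝ) - -(q^j*q^(j+t+2)) ≠ 0 := by nlinarith [pow_pos hq0 j, pow_pos hq0 (j+t+2)]
  field_simp
  ring

lemma key_top {q : ℝ} (hq0 : 0 < q) (hq1 : q < 1) (m : ℕ) :
    cc q (2*m+2) (m+1) = -(q ^ (2*m+1) / ((1 + q ^ (2*m+1)) * (1 + q ^ (2*m+2)))) * cc q (2*m) m := by
  have e1 : 2*m+2 - (m+1) = m+1 := by omega
  have e2 : 2*m+2+1 - (m+1) = m+2 := by omega
  have e3 : 2*m - m = m := by omega
  have e4 : 2*m+1 - m = m+1 := by omega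
  have e5 : m+1 - (m+1) = 0 := by omega
  have e6 : m - m = 0 := by omega
  simp only [cc, qbinom, e1, e2, e3, e4, e5, e6, qPoch_zero]
  have h4 : qPoch (-q) q (m+1) = qPoch (-q) q m * (1 - q^m*(-q)) := qPoch_succ (-q) q m
  have h5 : qPoch (-(q^(m+2))) q (m+1)
      = qPoch (-(q^(m+2))) q m * (1 - q^m*(-(q^(m+2)))) := qPoch_succ _ q m
  have hden : (0:ℝ) < 1 + q^(m+1) := by positivity
  have hB1 : (0:ℝ) < qPoch (-(q^(m+1))) q m :=
    qPoch_neg_pos hq0 (neg_nonpos.mpr (pow_pos hq0 _).le) m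
  have hB2m : qPoch (-(q^(m+2))) q m
      = qPoch (-(q^(m+1))) q m * (1 + q^m * q^(m+1)) / (1 + q^(m+1)) := by
    have hs := qPoch_succ' (-(q^(m+1))) q m
    rw [show q * -(q^(m+1)) = -(q^(m+2)) by ring] at hs
    have hr := qPoch_succ (-(q^(m+1))) q m
    field_simp
    linear_combination hr - hs
  rw [h4, h5, hB2m]
  have hPm := (qPoch_q_pos hq0 hq1 m).ne'
  have hPm1 := (qPoch_q_pos hq0 hq1 (m+1)).ne'
  have hNm := (qPoch_neg_pos hq0 (q := q) (a := -q) (by linarith) m).ne'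
  have f4 : (1:ℝ) - q^m*(-q) ≠ 0 := by nlinarith [pow_pos hq0 m]
  have f5 : (1:ℝ) - q^m*(-(q^(m+2))) ≠ 0 := by nlinarith [pow_pos hq0 m, pow_pos hq0 (m+2)]
  have f7 : (0:ℝ) < 1 + q^(2*m+1) := by positivity
  have f8 : (0:ℝ) < 1 + q^(2*m+2) := by positivity
  have f9 : (0:ℝ) < 1 + q^m * q^(m+1) := by positivity
  have g3 : (1:ℝ) - -(q*q^m) ≠ 0 := by nlinarith [pow_pos hq0 m]
  have g4 : (1:ℝ) - -(q^m*q^(m+2)) ≠ 0 := by nlinarith [pow_pos hq0 m, pow_pos hq0 (m+2)]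
  field_simp
  ring

noncomputable def T (q : ℝ) (n : ℕ) (x : ℝ) : ℝ :=
  ∑ k ∈ Finset.range (n/2+1), cc q n k * x^(n-2*k)

lemma Tstep {q : ℝ} (hq0 : 0 < q) (hq1 : q < 1) (n : ℕ) (x : ℝ) :
    T q (n+2) x = x * T q (n+1) x -
      q^(n+1)/((1+q^(n+1))*(1+q^(n+2))) * T q n x := by
  rcases Nat.even_or_odd n with ⟨m, rfl⟩ | ⟨m, rfl⟩
  · have r2 : (m+m+2)/2+1 = m+2 := by omega
    have r1 : (m+m+1)/2+1 = m+1 := by omega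
    have r0 : (m+m)/2+1 = m+1 := by omega
    simp only [T, r2, r1, r0]
    rw [Finset.sum_range_succ, Finset.sum_range_succ', Finset.sum_range_succ',
        Finset.sum_range_succ]
    have hmain : ∑ k ∈ Finset.range m, cc q (m+m+2) (k+1) * x^(m+m+2-2*(k+1))
        = ∑ k ∈ Finset.range m, (x * (cc q (m+m+1) (k+1) * x^(m+m+1-2*(k+1)))
            - q^(m+m+1)/((1+q^(m+m+1))*(1+q^(m+m+2))) * (cc q (m+m) k * x^(m+m-2*k))) := by
      refine Finset.sum_congr rfl fun k hk => ?_
      have hk' := Finset.mem_range.mp hk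
      have hkey := key hq0 hq1 k (m+m-1-2*k)
      rw [show 2*k+(m+m-1-2*k)+3 = m+m+2 by omega, show 2*k+(m+m-1-2*k)+2 = m+m+1 by omega,
          show 2*k+(m+m-1-2*k)+1 = m+m by omega] at hkey
      rw [show m+m+2-2*(k+1) = (m+m-1-2*k)+1 by omega,
          show m+m+1-2*(k+1) = m+m-1-2*k by omega,
          show m+m-2*k = (m+m-1-2*k)+1 by omega, hkey]
      ring
    rw [hmain, Finset.sum_sub_distrib, ← Finset.mul_sum, ← Finset.mul_sum]
    have htop : cc q (m+m+2) (m+1) * x^(m+m+2-2*(m+1))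
        = -(q^(m+m+1)/((1+q^(m+m+1))*(1+q^(m+m+2))) * (cc q (m+m) m * x^(m+m-2*m))) := by
      have hkt := key_top hq0 hq1 m
      rw [show 2*m = m+m by omega] at hkt
      rw [show m+m+2-2*(m+1) = 0 by omega, show m+m-2*m = 0 by omega, hkt]
      ring
    have hbot : cc q (m+m+2) 0 * x^(m+m+2-2*0)
        = x * (cc q (m+m+1) 0 * x^(m+m+1-2*0)) := by
      rw [cc_zero hq0 hq1, cc_zero hq0 hq1,
          show m+m+2-2*0 = (m+m+1)+1 by omega, show m+m+1-2*0 = m+m+1 by omega]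
      ring
    rw [htop, hbot]
    ring
  · have r2 : (2*m+1+2)/2+1 = m+2 := by omega
    have r1 : (2*m+1+1)/2+1 = m+2 := by omega
    have r0 : (2*m+1)/2+1 = m+1 := by omega
    simp only [T, r2, r1, r0]
    rw [Finset.sum_range_succ' (fun k => cc q (2*m+1+2) k * x^(2*m+1+2-2*k)) (m+1),
        Finset.sum_range_succ' (fun k => cc q (2*m+1+1) k * x^(2*m+1+1-2*k)) (m+1)]
    have hmain : ∑ k ∈ Finset.range (m+1), cc q (2*m+1+2) (k+1) * x^(2*m+1+2-2*(k+1))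
        = ∑ k ∈ Finset.range (m+1), (x * (cc q (2*m+1+1) (k+1) * x^(2*m+1+1-2*(k+1)))
            - q^(2*m+1+1)/((1+q^(2*m+1+1))*(1+q^(2*m+1+2))) * (cc q (2*m+1) k * x^(2*m+1-2*k))) := by
      refine Finset.sum_congr rfl fun k hk => ?_
      have hk' := Finset.mem_range.mp hk
      have hkey := key hq0 hq1 k (2*m-2*k)
      rw [show 2*k+(2*m-2*k)+3 = 2*m+1+2 by omega, show 2*k+(2*m-2*k)+2 = 2*m+1+1 by omega,
          show 2*k+(2*m-2*k)+1 = 2*m+1 by omega] at hkey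
      rw [show 2*m+1+2-2*(k+1) = (2*m-2*k)+1 by omega,
          show 2*m+1+1-2*(k+1) = 2*m-2*k by omega,
          show 2*m+1-2*k = (2*m-2*k)+1 by omega, hkey]
      ring
    rw [hmain, Finset.sum_sub_distrib, ← Finset.mul_sum, ← Finset.mul_sum]
    have hbot : cc q (2*m+1+2) 0 * x^(2*m+1+2-2*0)
        = x * (cc q (2*m+1+1) 0 * x^(2*m+1+1-2*0)) := by
      rw [cc_zero hq0 hq1, cc_zero hq0 hq1,
          show 2*m+1+2-2*0 = (2*m+2)+1 by omega, show 2*m+1+1-2*0 = 2*m+2 by omega]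
      ring
    rw [hbot]
    ring

theorem q_chebyshev_second_closed_form (q : ℝ) (hq0 : 0 < q) (hq1 : q < 1)
    (u : ℕ → ℝ → ℝ)
    (h0 : ∀ x, u 0 x = 1) (h1 : ∀ x, u 1 x = x)
    (hrec : ∀ n x, u (n + 2) x = x * u (n + 1) x -
      (q ^ (n + 1) / ((1 + q ^ (n + 1)) * (1 + q ^ (n + 2)))) * u n x) :
    ∀ (n : ℕ) (x : ℝ),
      u n x = ∑ k ∈ Finset.range (n / 2 + 1),
        qbinom q (n - k) k * q ^ (k ^ 2) * (-1 : ℝ) ^ k * x ^ (n - 2 * k) /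
          (qPoch (-q) q k * qPoch (-(q ^ (n + 1 - k))) q k) := by
  have main : ∀ n : ℕ, ∀ x : ℝ, u n x = T q n x := by
    have H : ∀ n : ℕ, (∀ x, u n x = T q n x) ∧ (∀ x, u (n+1) x = T q (n+1) x) := by
      intro n
      induction n with
      | zero =>
        constructor
        · intro x
          rw [h0]
          simp [T, cc_zero hq0 hq1]
        · intro x
          rw [h1]
          have h12 : (1:ℕ)/2+1 = 1 := by norm_num
          simp [T, h12, cc_zero hq0 hq1]
      | succ n ih =>
        refine ⟨ih.2, fun x => ?_⟩
        rw [hrec n x, ih.1 x, ih.2 x, Tstep hq0 hq1 n x]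
    intro n; exact (H n).1
  intro n x
  rw [main n x]
  simp only [T]
  refine Finset.sum_congr rfl fun k _ => ?_
  rw [cc]
  ring
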